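/- Let ε ∈ (0,1/2), C ≥ 1, n, d ∈ ℕ, and A, B > 0. Let M be a finite metric space with at least two points that is C-embeddable into the d-dimensional Euclidean space ℓ₂^d, let β ≥ 1/2, and let 𝒩 = {N_x}_{x∈M} be a family of pairwise disjoint nonempty finite metric spaces such that for every x ∈ M the weighted diamond W_n admits no embedding into N_x with distortion ≤ A/B. Suppose φ : W_n → M_β[𝒩] satisfies B·d_{W_n}(u₁,u₂) ≤ d_β(φ(u₁),φ(u₂)) ≤ A·d_{W_n}(u₁,u₂) for all u₁, u₂ ∈ W_n. Then either 2^{⌊√n⌋} ≤ (2C(A/B)+1)^d, or A/B ≥ (1/2+ε)^{⌊√n⌋−n}. -/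

import Mathlib

noncomputable section

open scoped ENNReal Classical

namespace Stmt

/-- Vertex set together with the (oriented) edge relation of the diamond graph `D n`. -/
def VE : ℕ → (V : Type) × (V → V → Prop)
  | 0 => ⟨Fin 2, fun u v => u = 0 ∧ v = 1⟩
  | n + 1 =>
      ⟨(VE n).1 ⊕ ({e : (VE n).1 × (VE n).1 // (VE n).2 e.1 e.2} × Bool),
        fun u v =>
          ∃ (e : {e : (VE n).1 × (VE n).1 // (VE n).2 e.1 e.2}) (b : Bool),
            (u = Sum.inl e.1.1 ∧ v = Sum.inr (e, b)) ∨
            (u = Sum.inr (e, b) ∧ v = Sum.inl e.1.2)⟩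

/-- Vertices of the diamond graph `D n` (equivalently, of the weighted diamond `W n`). -/
def Vert (n : ℕ) : Type := (VE n).1

/-- The (oriented) edge relation of the diamond graph `D n`. -/
def dEdge (n : ℕ) : Vert n → Vert n → Prop := (VE n).2

/-- The edges of generation `k` inside the vertex set of `D n`: the edges of `D k`,
transported to `Vert n` via the canonical inclusions.  These are the edges of the
weighted diamond `W n`, which get weight `(1/2 + ε) ^ k`. -/
def edgeAt : (n : ℕ) → (k : ℕ) → Vert n → Vert n → Prop
  | 0, k => fun u v => k = 0 ∧ dEdge 0 u v
  | n + 1, k => fun u v =>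
      (k = n + 1 ∧ dEdge (n + 1) u v) ∨
      (∃ u' v' : Vert n, u = Sum.inl u' ∧ v = Sum.inl v' ∧ edgeAt n k u' v')

/-- Edge weights of the weighted diamond `W n`:  the value is `(1/2 + ε) ^ k` if `{u, v}`
is an edge of generation `k`, and `∞` if `{u, v}` is not an edge of `W n`. -/
def wCost (ε : ℝ) (n : ℕ) (u v : Vert n) : ℝ≥0∞ :=
  ⨅ (k : ℕ) (_ : edgeAt n k u v ∨ edgeAt n k v u), ENNReal.ofReal ((1 / 2 + ε) ^ k)

/-- Total weight of a walk, recorded as the list of visited vertices. -/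
def walkCost {V : Type*} (c : V → V → ℝ≥0∞) : List V → ℝ≥0∞
  | [] => 0
  | [_] => 0
  | u :: v :: l => c u v + walkCost c (v :: l)

/-- The shortest-path (extended) distance associated to an edge-weight function `c`. -/
def spDist {V : Type*} (c : V → V → ℝ≥0∞) (u v : V) : ℝ≥0∞ :=
  ⨅ p : { l : List V // l.head? = some u ∧ l.getLast? = some v }, walkCost c p.1

/-- The shortest-path metric `d_{W_n}` of the weighted diamond `W n` (with parameter `ε`). -/
def dW (ε : ℝ) (n : ℕ) (u v : Vert n) : ℝ :=
  (spDist (wCost ε n) u v).toReal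

/-- `embedsM K dV dY` : there is a map of distortion at most `K` from the space with distance
function `dV` to the space with distance function `dY`. -/
def embedsM {V Y : Type*} (K : ℝ) (dV : V → V → ℝ) (dY : Y → Y → ℝ) : Prop :=
  ∃ f : V → Y, Function.Injective f ∧ ∃ r : ℝ, 0 < r ∧
    ∀ a b, r * dV a b ≤ dY (f a) (f b) ∧ dY (f a) (f b) ≤ K * (r * dV a b)


/-- The diameter of a space with respect to an explicit distance function. -/
def diamOf {α : Type*} (d : α → α → ℝ) : ℝ :=
  ⨆ p : α × α, d p.1 p.2

/-- The minimal positive distance `min_{x ≠ y} d (x, y)`. -/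
def minSep {α : Type*} (d : α → α → ℝ) : ℝ :=
  ⨅ p : { p : α × α // p.1 ≠ p.2 }, d p.1.1 p.1.2

/-- The normalizing factor `γ = (max_z diam N_z) / (min_{x ≠ y} d_M (x, y))` of the metric
composition. -/
def gam {M : Type*} (N : M → Type*) (dM : M → M → ℝ) (dN : ∀ x, N x → N x → ℝ) : ℝ :=
  (⨆ x : M, diamOf (dN x)) / minSep dM

/-- The distance function `d_β` of the metric composition `M_β[𝒩]` on the disjoint union
`Σ x, N x`. -/
def comp {M : Type*} {N : M → Type*} (β : ℝ) (dM : M → M → ℝ) (dN : ∀ x, N x → N x → ℝ) :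
    (Σ x, N x) → (Σ x, N x) → ℝ :=
  fun p q =>
    if h : p.1 = q.1 then dN p.1 p.2 (cast (congrArg N h.symm) q.2)
    else β * gam N dM dN * dM p.1 q.1


-- ===== auxiliary development =====

section Aux

lemma edgeAt_of_dEdge : ∀ (n : ℕ) (u v : Vert n), dEdge n u v → edgeAt n n u v
  | 0, u, v, h => ⟨rfl, h⟩
  | n + 1, u, v, h => Or.inl ⟨rfl, h⟩

lemma edgeAt_le : ∀ (n k : ℕ) (u v : Vert n), edgeAt n k u v → k ≤ n
  | 0, k, u, v, h => h.1.le
  | n + 1, k, u, v, h => by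
    rcases h with ⟨hk, _⟩ | ⟨u', v', _, _, h⟩
    · exact hk.le
    · exact (edgeAt_le n k u' v' h).trans (Nat.le_succ n)

lemma not_edgeAt_inr_inr (n k : ℕ) (a b : {e : Vert n × Vert n // dEdge n e.1 e.2} × Bool) :
    ¬ edgeAt (n + 1) k (Sum.inr a : Vert (n+1)) (Sum.inr b) := by
  rintro (⟨_, e, bb, ⟨h1, h2⟩ | ⟨h1, h2⟩⟩ | ⟨u', v', h1, h2, h3⟩) <;> simp_all

/-- canonical base vertex -/
def base : (n : ℕ) → Vert n
  | 0 => (0 : Fin 2)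
  | n + 1 => (Sum.inl (base n) : Vert n ⊕ _)

/-- symmetric closure of gen-n edges -/
def sE (n : ℕ) (a b : Vert n) : Prop := dEdge n a b ∨ dEdge n b a

lemma conn_base : ∀ (n : ℕ) (v : Vert n), Relation.ReflTransGen (sE n) (base n) v := by
  intro n
  induction n with
  | zero =>
    intro v
    match v with
    | (0 : Fin 2) => exact Relation.ReflTransGen.refl
    | (1 : Fin 2) => exact Relation.ReflTransGen.single (Or.inl ⟨rfl, rfl⟩)
  | succ n ih =>
    have lift1 : ∀ a b : Vert n, sE n a b →
        Relation.ReflTransGen (sE (n+1)) (Sum.inl a : Vert n ⊕ _) (Sum.inl b) := by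
      intro a b h
      rcases h with h | h
      · have h1 : sE (n+1) (Sum.inl a : Vert n ⊕ _) (Sum.inr (⟨(a, b), h⟩, true)) :=
          Or.inl ⟨⟨(a, b), h⟩, true, Or.inl ⟨rfl, rfl⟩⟩
        have h2 : sE (n+1) (Sum.inr (⟨(a, b), h⟩, true) : Vert n ⊕ _) (Sum.inl b) :=
          Or.inl ⟨⟨(a, b), h⟩, true, Or.inr ⟨rfl, rfl⟩⟩
        exact (Relation.ReflTransGen.single h1).trans (Relation.ReflTransGen.single h2)
      · have h1 : sE (n+1) (Sum.inl a : Vert n ⊕ _) (Sum.inr (⟨(b, a), h⟩, true)) :=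
          Or.inr ⟨⟨(b, a), h⟩, true, Or.inr ⟨rfl, rfl⟩⟩
        have h2 : sE (n+1) (Sum.inr (⟨(b, a), h⟩, true) : Vert n ⊕ _) (Sum.inl b) :=
          Or.inr ⟨⟨(b, a), h⟩, true, Or.inl ⟨rfl, rfl⟩⟩
        exact (Relation.ReflTransGen.single h1).trans (Relation.ReflTransGen.single h2)
    have step : ∀ u' : Vert n,
        Relation.ReflTransGen (sE (n+1)) (base (n+1)) (Sum.inl u' : Vert n ⊕ _) := by
      intro u'
      have h := ih u'
      induction h with
      | refl => exact Relation.ReflTransGen.refl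
      | tail hab hbc ih2 => exact ih2.trans (lift1 _ _ hbc)
    intro v
    match v with
    | Sum.inl u' => exact step u'
    | Sum.inr (e, bb) =>
      exact (step e.1.1).trans
        (Relation.ReflTransGen.single (Or.inl ⟨e, bb, Or.inl ⟨rfl, rfl⟩⟩))

lemma conn (n : ℕ) (u v : Vert n) : Relation.ReflTransGen (sE n) u v :=
  (have : Std.Symm (sE n) := ⟨fun _ _ h => h.symm⟩;
    (Std.Symm.symm (base n) u (conn_base n u) : Relation.ReflTransGen (sE n) u (base n))).trans (conn_base n v)

end Aux

section SP

variable {V : Type*} {c : V → V → ℝ≥0∞}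

lemma wCost_le {ε : ℝ} {n k : ℕ} {u v : Vert n} (h : edgeAt n k u v ∨ edgeAt n k v u) :
    wCost ε n u v ≤ ENNReal.ofReal ((1 / 2 + ε) ^ k) := by
  exact iInf₂_le k h

lemma spDist_le_walk {u v : V} (l : List V) (h1 : l.head? = some u) (h2 : l.getLast? = some v) :
    spDist c u v ≤ walkCost c l :=
  iInf_le (fun p : { l : List V // l.head? = some u ∧ l.getLast? = some v } => walkCost c p.1)
    ⟨l, h1, h2⟩

lemma spDist_self_le (u : V) : spDist c u u ≤ 0 := by
  simpa [walkCost] using spDist_le_walk (c := c) [u] rfl rfl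

lemma spDist_le_single (u v : V) : spDist c u v ≤ c u v := by
  simpa [walkCost] using spDist_le_walk (c := c) [u, v] rfl rfl

lemma spDist_le_two (u v w : V) : spDist c u w ≤ c u v + c v w := by
  simpa [walkCost] using spDist_le_walk (c := c) [u, v, w] rfl rfl

lemma walkCost_append_single : ∀ (l : List V) (a b : V), l.getLast? = some a →
    walkCost c (l ++ [b]) = walkCost c l + c a b := by
  intro l
  induction l with
  | nil => intro a b h; simp at h
  | cons x l ih =>
    intro a b h
    match l, h with
    | [], h =>
      simp only [List.getLast?_singleton, Option.some.injEq] at h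
      subst h
      simp [walkCost]
    | y :: l', h =>
      have h' : (y :: l').getLast? = some a := by
        rwa [List.getLast?_cons_cons] at h
      have := ih a b h'
      simp only [List.cons_append, List.append_eq, walkCost] at *
      rw [this, add_assoc]

lemma spDist_lt_top_of_conn {n : ℕ} {ε : ℝ} (u v : Vert n) :
    spDist (wCost ε n) u v < ⊤ := by
  have key : ∀ w : Vert n, Relation.ReflTransGen (sE n) u w →
      spDist (wCost ε n) u w < ⊤ := by
    intro w h
    induction h with
    | refl => exact lt_of_le_of_lt (spDist_self_le u) (by simp)
    | @tail b w hab hbc ih =>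
      rcases iInf_lt_iff.1 ih with ⟨⟨l, hl1, hl2⟩, hcost⟩
      have hl1' : l.head? = some u := hl1
      have hedge : wCost ε n b w < ⊤ := by
        rcases hbc with h | h
        · exact lt_of_le_of_lt (wCost_le (Or.inl (edgeAt_of_dEdge n _ _ h))) ENNReal.ofReal_lt_top
        · exact lt_of_le_of_lt (wCost_le (Or.inr (edgeAt_of_dEdge n _ _ h))) ENNReal.ofReal_lt_top
      have hhead : (l ++ [w]).head? = some u := by
        cases l with
        | nil => simp at hl1'
        | cons x l' => simpa using hl1'
      have hlast : (l ++ [w]).getLast? = some w := by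
        simp [List.getLast?_concat]
      calc spDist (wCost ε n) u w ≤ walkCost (wCost ε n) (l ++ [w]) :=
            spDist_le_walk _ hhead hlast
        _ = walkCost (wCost ε n) l + wCost ε n b w := walkCost_append_single l b w hl2
        _ < ⊤ := ENNReal.add_lt_top.2 ⟨hcost, hedge⟩
  exact key v (conn n u v)

end SP

section Lip

variable {ε : ℝ}

/-- 1-Lipschitz potentials for `W n`. -/
def Lip (ε : ℝ) (n : ℕ) (g : Vert n → ℝ) : Prop :=
  ∀ k (u v : Vert n), edgeAt n k u v → |g u - g v| ≤ (1 / 2 + ε) ^ k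

lemma le_wCost_of_lip {n : ℕ} {g : Vert n → ℝ} (hg : Lip ε n g) (u v : Vert n) :
    ENNReal.ofReal |g u - g v| ≤ wCost ε n u v := by
  refine le_iInf₂ fun k h => ENNReal.ofReal_le_ofReal ?_
  rcases h with h | h
  · exact hg k u v h
  · rw [abs_sub_comm]; exact hg k v u h

lemma le_walkCost_of_lip {n : ℕ} {g : Vert n → ℝ} (hg : Lip ε n g) :
    ∀ (l : List (Vert n)) (u v : Vert n), l.head? = some u → l.getLast? = some v →
      ENNReal.ofReal |g u - g v| ≤ walkCost (wCost ε n) l := by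
  intro l
  induction l with
  | nil => intro u v h; simp at h
  | cons x l ih =>
    intro u v h1 h2
    have hx : x = u := by simpa using h1
    subst hx
    match l, h2 with
    | [], h2 =>
      have : x = v := by simpa using h2
      subst this
      simp [walkCost]
    | y :: l', h2 =>
      have h2' : (y :: l').getLast? = some v := by rwa [List.getLast?_cons_cons] at h2
      have ihy := ih y v rfl h2'
      have tri : |g x - g v| ≤ |g x - g y| + |g y - g v| := abs_sub_le _ _ _
      calc ENNReal.ofReal |g x - g v| ≤ ENNReal.ofReal (|g x - g y| + |g y - g v|) :=
            ENNReal.ofReal_le_ofReal tri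
        _ ≤ ENNReal.ofReal |g x - g y| + ENNReal.ofReal |g y - g v| :=
            ENNReal.ofReal_add_le
        _ ≤ wCost ε n x y + walkCost (wCost ε n) (y :: l') :=
            add_le_add (le_wCost_of_lip hg x y) ihy
        _ = walkCost (wCost ε n) (x :: y :: l') := rfl

lemma le_spDist_of_lip {n : ℕ} {g : Vert n → ℝ} (hg : Lip ε n g) (u v : Vert n) :
    ENNReal.ofReal |g u - g v| ≤ spDist (wCost ε n) u v := by
  refine le_iInf fun p => le_walkCost_of_lip hg p.1 u v p.2.1 p.2.2

/-- midpoint-averaging extension of a potential -/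
def extP {n : ℕ} (g : Vert n → ℝ) : Vert (n + 1) → ℝ :=
  fun w => Sum.elim g (fun p => (g p.1.1.1 + g p.1.1.2) / 2) w

lemma lip_extP {n : ℕ} {g : Vert n → ℝ} (hε0 : 0 < ε) (hg : Lip ε n g) :
    Lip ε (n + 1) (extP g) := by
  have hb : (0:ℝ) < 1 / 2 + ε := by linarith
  intro k u v h
  rcases h with ⟨hk, e, bb, ⟨h1, h2⟩ | ⟨h1, h2⟩⟩ | ⟨u', v', h1, h2, h3⟩
  · subst hk h1 h2
    have he := hg n e.1.1 e.1.2 (edgeAt_of_dEdge n _ _ e.2)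
    have : |extP g (Sum.inl e.1.1) - extP g (Sum.inr (e, bb))| = |g e.1.1 - g e.1.2| / 2 := by
      simp only [extP, Sum.elim_inl, Sum.elim_inr]
      show |g e.1.1 - (g e.1.1 + g e.1.2) / 2| = |g e.1.1 - g e.1.2| / 2
      rw [show g e.1.1 - (g e.1.1 + g e.1.2) / 2 = (g e.1.1 - g e.1.2) / 2 by ring,
        abs_div, abs_two]
    rw [this]
    calc |g e.1.1 - g e.1.2| / 2 ≤ (1 / 2 + ε) ^ n / 2 := by linarith
      _ ≤ (1 / 2 + ε) ^ n * (1 / 2 + ε) := by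
          rw [div_eq_mul_inv]
          refine mul_le_mul_of_nonneg_left (by linarith) (by positivity)
      _ = (1 / 2 + ε) ^ (n + 1) := (pow_succ _ _).symm
  · subst hk h1 h2
    have he := hg n e.1.1 e.1.2 (edgeAt_of_dEdge n _ _ e.2)
    have : |extP g (Sum.inr (e, bb)) - extP g (Sum.inl e.1.2)| = |g e.1.1 - g e.1.2| / 2 := by
      simp only [extP, Sum.elim_inl, Sum.elim_inr]
      show |(g e.1.1 + g e.1.2) / 2 - g e.1.2| = |g e.1.1 - g e.1.2| / 2
      rw [show (g e.1.1 + g e.1.2) / 2 - g e.1.2 = (g e.1.1 - g e.1.2) / 2 by ring,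
        abs_div, abs_two]
    rw [this]
    calc |g e.1.1 - g e.1.2| / 2 ≤ (1 / 2 + ε) ^ n / 2 := by linarith
      _ ≤ (1 / 2 + ε) ^ n * (1 / 2 + ε) := by
          rw [div_eq_mul_inv]
          refine mul_le_mul_of_nonneg_left (by linarith) (by positivity)
      _ = (1 / 2 + ε) ^ (n + 1) := (pow_succ _ _).symm
  · subst h1 h2
    exact hg k u' v' h3

end Lip

section Chain

variable {ε : ℝ}

/-- positivity potential -/
lemma lip_delta {n : ℕ} (hε0 : 0 < ε) (hε : ε < 1 / 2) (u : Vert n) :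
    Lip ε n (fun w => if w = u then (1 / 2 + ε) ^ n else 0) := by
  have hb0 : (0:ℝ) ≤ 1 / 2 + ε := by linarith
  intro k a b h
  have hk : k ≤ n := edgeAt_le n k a b h
  have hpow : (1 / 2 + ε) ^ n ≤ (1 / 2 + ε) ^ k :=
    pow_le_pow_of_le_one hb0 (by linarith) hk
  have hpn : (0:ℝ) ≤ (1 / 2 + ε) ^ n := by positivity
  by_cases ha : a = u <;> by_cases hb2 : b = u
  · simp only [if_pos ha, if_pos hb2, sub_self, abs_zero]; positivity
  · simp only [if_pos ha, if_neg hb2, sub_zero]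
    rw [abs_of_nonneg hpn]; exact hpow
  · simp only [if_neg ha, if_pos hb2, zero_sub, abs_neg]
    rw [abs_of_nonneg hpn]; exact hpow
  · simp only [if_neg ha, if_neg hb2, sub_self, abs_zero]; positivity

lemma dW_pos {n : ℕ} (hε0 : 0 < ε) (hε : ε < 1 / 2) {u v : Vert n} (huv : u ≠ v) :
    0 < dW ε n u v := by
  have hb0 : (0:ℝ) < 1 / 2 + ε := by linarith
  have hpn : (0:ℝ) < (1 / 2 + ε) ^ n := pow_pos hb0 n
  have hlow : ENNReal.ofReal ((1 / 2 + ε) ^ n) ≤ spDist (wCost ε n) u v := by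
    have h2 := le_spDist_of_lip (lip_delta hε0 hε u) u v
    have h3 : |(if u = u then (1 / 2 + ε) ^ n else 0) - (if v = u then (1 / 2 + ε) ^ n else 0)|
        = (1 / 2 + ε) ^ n := by
      rw [if_pos rfl, if_neg (Ne.symm huv), sub_zero, abs_of_nonneg hpn.le]
    rwa [h3] at h2
  refine ENNReal.toReal_pos ?_ (spDist_lt_top_of_conn u v).ne
  intro h0
  rw [h0] at hlow
  simp only [nonpos_iff_eq_zero, ENNReal.ofReal_eq_zero] at hlow
  exact absurd hlow (not_le.2 hpn)

end Chain

section Pair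

variable {ε : ℝ}

def MidT (n : ℕ) : Type := {e : Vert n × Vert n // dEdge n e.1 e.2} × Bool

lemma lip_pair {m : ℕ} (hε0 : 0 < ε) (hε : ε < 1 / 2) {a b : Vert (m + 1)} (hab : a ≠ b)
    (ha : ∃ x : MidT m, a = Sum.inr x) (hb : ∃ y : MidT m, b = Sum.inr y) :
    Lip ε (m + 1) (fun u =>
      if u = a then (1 / 2 + ε) ^ (m + 1)
      else if u = b then -((1 / 2 + ε) ^ (m + 1)) else 0) := by
  have hb0 : (0:ℝ) ≤ 1 / 2 + ε := by linarith
  have hpn : (0:ℝ) ≤ (1 / 2 + ε) ^ (m + 1) := by positivity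
  intro k u v h
  have hk : k ≤ m + 1 := edgeAt_le _ k u v h
  have hpow : (1 / 2 + ε) ^ (m + 1) ≤ (1 / 2 + ε) ^ k :=
    pow_le_pow_of_le_one hb0 (by linarith) hk
  obtain ⟨x, rfl⟩ := ha
  obtain ⟨y, rfl⟩ := hb
  set c : ℝ := (1 / 2 + ε) ^ (m + 1) with hc
  have habs : ∀ t : ℝ, t = c ∨ t = -c ∨ t = 0 → ∀ t' : ℝ, t' = c ∨ t' = -c ∨ t' = 0 →
      ¬(t = c ∧ t' = -c) → ¬(t = -c ∧ t' = c) → |t - t'| ≤ c := by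
    rintro t (rfl | rfl | rfl) t' (rfl | rfl | rfl) h1 h2
    · rw [sub_self, abs_zero]; exact hpn
    · exact absurd ⟨rfl, rfl⟩ h1
    · rw [sub_zero, abs_of_nonneg hpn]
    · exact absurd ⟨rfl, rfl⟩ h2
    · rw [sub_self, abs_zero]; exact hpn
    · rw [sub_zero, abs_neg, abs_of_nonneg hpn]
    · rw [zero_sub, abs_neg, abs_of_nonneg hpn]
    · rw [zero_sub, neg_neg, abs_of_nonneg hpn]
    · rw [sub_self, abs_zero]; exact hpn
  set g : Vert (m + 1) → ℝ := fun u =>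
    if u = Sum.inr x then c else if u = Sum.inr y then -c else 0 with hg
  have hcpos : 0 < c := by positivity
  have hval : ∀ w, g w = c ∨ g w = -c ∨ g w = 0 := by
    intro w
    by_cases h1 : w = Sum.inr x
    · left; simp only [hg, if_pos h1]
    · by_cases h2 : w = Sum.inr y
      · right; left; simp only [hg, if_neg h1, if_pos h2]
      · right; right; simp only [hg, if_neg h1, if_neg h2]
  have gc : ∀ w, g w = c → w = Sum.inr x := by
    intro w hw
    by_contra h1
    by_cases h2 : w = Sum.inr y
    · simp only [hg, if_neg h1, if_pos h2] at hw; linarith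
    · simp only [hg, if_neg h1, if_neg h2] at hw; linarith
  have gnc : ∀ w, g w = -c → w = Sum.inr y := by
    intro w hw
    by_contra h2
    by_cases h1 : w = Sum.inr x
    · simp only [hg, if_pos h1] at hw; linarith
    · simp only [hg, if_neg h1, if_neg h2] at hw; linarith
  have h1 : ¬(g u = c ∧ g v = -c) := by
    rintro ⟨hgu, hgv⟩
    rw [gc u hgu, gnc v hgv] at h
    exact not_edgeAt_inr_inr m k x y h
  have h2 : ¬(g u = -c ∧ g v = c) := by
    rintro ⟨hgu, hgv⟩
    rw [gnc u hgu, gc v hgv] at h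
    exact not_edgeAt_inr_inr m k y x h
  calc |g u - g v| ≤ c := habs _ (hval u) _ (hval v) h1 h2
    _ ≤ (1 / 2 + ε) ^ k := hpow

end Pair

section ChainDef

variable {ε : ℝ}

/-- recursive chain of midpoints descending toward the base pole -/
def chain (σ : ℕ → Bool) : (k : ℕ) → {v : Vert k // dEdge k (base k) v}
  | 0 => ⟨(1 : Fin 2), ⟨rfl, rfl⟩⟩
  | k + 1 =>
    ⟨(Sum.inr (⟨(base k, (chain σ k).1), (chain σ k).2⟩, σ k) : Vert k ⊕ _),
      ⟨⟨(base k, (chain σ k).1), (chain σ k).2⟩, σ k, Or.inl ⟨rfl, rfl⟩⟩⟩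

lemma chain_inj : ∀ (k : ℕ) (σ τ : ℕ → Bool), (chain σ k).1 = (chain τ k).1 →
    ∀ j, j < k → σ j = τ j := by
  intro k
  induction k with
  | zero => intro σ τ h j hj; omega
  | succ k ih =>
    intro σ τ h j hj
    have h' := h
    simp only [chain] at h'
    have h2 := Prod.mk.inj (Sum.inr.inj h')
    have h' : _ ∧ _ := ⟨Prod.mk.inj (Subtype.mk.inj h2.1), h2.2⟩
    obtain ⟨⟨_, hmid⟩, hbool⟩ := h'
    rcases Nat.lt_succ_iff_lt_or_eq.1 hj with hj' | rfl
    · exact ih σ τ hmid j hj'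
    · exact hbool

end ChainDef

section PackSec

variable {ε : ℝ}

/-- the main inductive package: `2^(m+1)` midpoints adjacent to a common vertex,
with injectivity and separating Lipschitz potentials. -/
lemma pack (hε0 : 0 < ε) (hε : ε < 1 / 2) (m : ℕ) :
    ∀ n, m + 1 ≤ n → ∃ (v : (ℕ → Bool) → Vert n) (p : Vert n),
      (∀ σ, edgeAt n (m + 1) p (v σ)) ∧
      (∀ σ τ, v σ = v τ → ∀ j, j < m + 1 → σ j = τ j) ∧
      (∀ σ τ, (∃ j, j < m + 1 ∧ σ j ≠ τ j) → ∃ g : Vert n → ℝ, Lip ε n g ∧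
        g (v σ) - g (v τ) = 2 * (1 / 2 + ε) ^ (m + 1)) := by
  intro n
  refine Nat.le_induction ?_ ?_ n
  · -- base case n = m + 1
    refine ⟨fun σ => (chain σ (m + 1)).1, base (m + 1), ?_, ?_, ?_⟩
    · intro σ
      exact edgeAt_of_dEdge _ _ _ (chain σ (m + 1)).2
    · intro σ τ h
      exact chain_inj (m + 1) σ τ h
    · intro σ τ ⟨j, hj, hne⟩
      have hne' : (chain σ (m + 1)).1 ≠ (chain τ (m + 1)).1 := by
        intro h
        exact hne (chain_inj (m + 1) σ τ h j hj)
      have hσr : ∃ x : MidT m, (chain σ (m + 1)).1 = Sum.inr x :=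
        ⟨(⟨(base m, (chain σ m).1), (chain σ m).2⟩, σ m), rfl⟩
      have hτr : ∃ y : MidT m, (chain τ (m + 1)).1 = Sum.inr y :=
        ⟨(⟨(base m, (chain τ m).1), (chain τ m).2⟩, τ m), rfl⟩
      refine ⟨_, lip_pair hε0 hε hne' hσr hτr, ?_⟩
      rw [if_pos rfl, if_neg (Ne.symm hne'), if_pos rfl]
      ring
  · -- inductive step
    rintro n hn ⟨v, p, H1, H2, H3⟩
    refine ⟨fun σ => (Sum.inl (v σ) : Vert n ⊕ _), (Sum.inl p : Vert n ⊕ _), ?_, ?_, ?_⟩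
    · intro σ
      exact Or.inr ⟨p, v σ, rfl, rfl, H1 σ⟩
    · intro σ τ h
      exact H2 σ τ (by injection h)
    · intro σ τ hστ
      obtain ⟨g, hg, hval⟩ := H3 σ τ hστ
      exact ⟨extP g, lip_extP hε0 hg, hval⟩

end PackSec

section DWfacts

variable {ε : ℝ}

lemma dW_le_edge {n k : ℕ} {u v : Vert n} (hε0 : 0 < ε)
    (h : edgeAt n k u v ∨ edgeAt n k v u) : dW ε n u v ≤ (1 / 2 + ε) ^ k := by
  have hb : (0:ℝ) ≤ (1 / 2 + ε) ^ k := by positivity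
  refine ENNReal.toReal_le_of_le_ofReal hb ?_
  exact (spDist_le_single u v).trans (wCost_le h)

lemma dW_pack {n m : ℕ} {u w p : Vert n} (hε0 : 0 < ε) (hε : ε < 1 / 2)
    (hup : edgeAt n (m + 1) p u) (hwp : edgeAt n (m + 1) p w)
    (g : Vert n → ℝ) (hg : Lip ε n g) (hval : g u - g w = 2 * (1 / 2 + ε) ^ (m + 1)) :
    dW ε n u w = 2 * (1 / 2 + ε) ^ (m + 1) := by
  set c : ℝ := (1 / 2 + ε) ^ (m + 1) with hc
  have hcpos : (0:ℝ) < c := by positivity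
  have hup' : wCost ε n u p ≤ ENNReal.ofReal c := wCost_le (Or.inr hup)
  have hwp' : wCost ε n p w ≤ ENNReal.ofReal c := wCost_le (Or.inl hwp)
  have hupper : spDist (wCost ε n) u w ≤ ENNReal.ofReal (2 * c) := by
    calc spDist (wCost ε n) u w ≤ wCost ε n u p + wCost ε n p w := spDist_le_two u p w
      _ ≤ ENNReal.ofReal c + ENNReal.ofReal c := add_le_add hup' hwp'
      _ = ENNReal.ofReal (2 * c) := by
          rw [← ENNReal.ofReal_add hcpos.le hcpos.le]; ring_nf
  have hlower : ENNReal.ofReal (2 * c) ≤ spDist (wCost ε n) u w := by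
    have := le_spDist_of_lip hg u w
    rwa [show |g u - g w| = 2 * c by rw [hval]; exact abs_of_nonneg (by positivity)] at this
  have heq : spDist (wCost ε n) u w = ENNReal.ofReal (2 * c) := le_antisymm hupper hlower
  rw [dW, heq, ENNReal.toReal_ofReal (by positivity)]

end DWfacts

section Packing
open MeasureTheory Metric

lemma euclid_packing {d : ℕ} {I : Type} [Fintype I] (z : I → EuclideanSpace ℝ (Fin d))
    {ρ R : ℝ} (hρ : 0 < ρ) (hR : 0 < R)
    (hsep : ∀ i j, i ≠ j → ρ ≤ dist (z i) (z j))
    (hdiam : ∀ i j, dist (z i) (z j) ≤ R) :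
    (Fintype.card I : ℝ) ≤ (2 * R / ρ + 1) ^ d := by
  rcases isEmpty_or_nonempty I with hI | ⟨⟨i₀⟩⟩
  · simp only [Fintype.card_eq_zero, Nat.cast_zero]
    positivity
  rcases Nat.eq_zero_or_pos d with rfl | hd
  · -- dimension 0 : the space is a subsingleton, so there is at most one point
    have hsub : Subsingleton (EuclideanSpace ℝ (Fin 0)) := by infer_instance
    have : ∀ i j : I, i = j := by
      intro i j
      by_contra hij
      have := hsep i j hij
      rw [Subsingleton.elim (z i) (z j), dist_self] at this
      linarith
    have hcard : Fintype.card I ≤ 1 := Fintype.card_le_one_iff.2 this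
    calc (Fintype.card I : ℝ) ≤ 1 := by exact_mod_cast hcard
      _ = (2 * R / ρ + 1) ^ 0 := by norm_num
  haveI : Nonempty (Fin d) := ⟨⟨0, hd⟩⟩
  haveI : Nontrivial (EuclideanSpace ℝ (Fin d)) := by
    infer_instance
  have hfr : Module.finrank ℝ (EuclideanSpace ℝ (Fin d)) = d := finrank_euclideanSpace_fin
  set u := volume (ball (0 : EuclideanSpace ℝ (Fin d)) 1) with hu
  have hu0 : u ≠ 0 := (measure_ball_pos volume _ one_pos).ne'
  have hut : u ≠ ⊤ := measure_ball_lt_top.ne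
  have hvol : ∀ (x : EuclideanSpace ℝ (Fin d)) (r : ℝ), 0 ≤ r →
      volume (ball x r) = ENNReal.ofReal (r ^ d) * u := by
    intro x r hr
    rw [Measure.addHaar_ball volume x hr, hfr]
  have hdisj : Set.PairwiseDisjoint (Finset.univ : Finset I)
      (fun i => ball (z i) (ρ / 2)) := by
    intro i _ j _ hij
    exact ball_disjoint_ball (by linarith [hsep i j hij])
  have hsum : volume (⋃ i ∈ (Finset.univ : Finset I), ball (z i) (ρ / 2)) =
      ∑ i : I, volume (ball (z i) (ρ / 2)) :=
    measure_biUnion_finset hdisj (fun i _ => measurableSet_ball)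
  have hsub : (⋃ i ∈ (Finset.univ : Finset I), ball (z i) (ρ / 2)) ⊆
      ball (z i₀) (R + ρ / 2) := by
    intro y hy
    simp only [Finset.mem_univ, Set.iUnion_true, Set.mem_iUnion] at hy
    obtain ⟨i, hi⟩ := hy
    have ht : dist y (z i₀) ≤ dist y (z i) + dist (z i) (z i₀) := dist_triangle _ _ _
    have h1 : dist y (z i) < ρ / 2 := mem_ball.1 hi
    have h2 : dist (z i) (z i₀) ≤ R := hdiam i i₀
    exact mem_ball.2 (by linarith)
  have key : (Fintype.card I : ℝ≥0∞) * (ENNReal.ofReal ((ρ / 2) ^ d) * u) ≤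
      ENNReal.ofReal ((R + ρ / 2) ^ d) * u := by
    calc (Fintype.card I : ℝ≥0∞) * (ENNReal.ofReal ((ρ / 2) ^ d) * u)
        = ∑ _x : I, (ENNReal.ofReal ((ρ / 2) ^ d) * u) := by
          rw [Finset.sum_const, Finset.card_univ, nsmul_eq_mul]
      _ = ∑ i : I, volume (ball (z i) (ρ / 2)) := by
          refine Finset.sum_congr rfl fun i _ => ?_
          rw [hvol (z i) (ρ / 2) (by linarith)]
      _ = volume (⋃ i ∈ (Finset.univ : Finset I), ball (z i) (ρ / 2)) := hsum.symm
      _ ≤ volume (ball (z i₀) (R + ρ / 2)) := measure_mono hsub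
      _ = ENNReal.ofReal ((R + ρ / 2) ^ d) * u := hvol _ _ (by linarith)
  rw [← mul_assoc, ENNReal.mul_le_mul_iff_left hu0 hut] at key
  have key2 : (Fintype.card I : ℝ) * (ρ / 2) ^ d ≤ (R + ρ / 2) ^ d := by
    rw [show ((Fintype.card I : ℝ≥0∞)) = ENNReal.ofReal (Fintype.card I : ℝ) by
        simp [ENNReal.ofReal_natCast],
      ← ENNReal.ofReal_mul (by positivity)] at key
    exact (ENNReal.ofReal_le_ofReal_iff (by positivity)).1 key
  have hρ2 : (0:ℝ) < (ρ / 2) ^ d := by positivity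
  rw [← le_div_iff₀ hρ2] at key2
  calc (Fintype.card I : ℝ) ≤ (R + ρ / 2) ^ d / (ρ / 2) ^ d := key2
    _ = ((R + ρ / 2) / (ρ / 2)) ^ d := (div_pow _ _ _).symm
    _ = (2 * R / ρ + 1) ^ d := by
        congr 1
        field_simp

end Packing

section OrderFacts

lemma minSep_pos {M : Type*} [MetricSpace M] [Fintype M] [Nontrivial M] :
    0 < minSep (fun a b : M => dist a b) := by
  obtain ⟨a, b, hab⟩ := exists_pair_ne M
  haveI : Nonempty {p : M × M // p.1 ≠ p.2} := ⟨⟨(a, b), hab⟩⟩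
  obtain ⟨q, hq⟩ := Finite.exists_min (fun p : {p : M × M // p.1 ≠ p.2} => dist p.1.1 p.1.2)
  exact lt_of_lt_of_le (dist_pos.2 q.2) (le_ciInf hq)

lemma minSep_le {M : Type*} [MetricSpace M] {x y : M} (h : x ≠ y) :
    minSep (fun a b : M => dist a b) ≤ dist x y := by
  refine ciInf_le ⟨0, ?_⟩ (⟨(x, y), h⟩ : {p : M × M // p.1 ≠ p.2})
  rintro t ⟨p, rfl⟩
  exact dist_nonneg

lemma le_diamOf {α : Type*} [MetricSpace α] [Fintype α] (a b : α) :
    dist a b ≤ diamOf (fun x y : α => dist x y) := by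
  unfold diamOf
  exact le_ciSup (f := fun p : α × α => dist p.1 p.2)
    (Set.Finite.bddAbove (Set.finite_range _)) (a, b)

lemma diamOf_nonneg {α : Type*} [MetricSpace α] [Fintype α] [Nonempty α] :
    0 ≤ diamOf (fun x y : α => dist x y) := by
  obtain ⟨a⟩ := (inferInstance : Nonempty α)
  simpa using le_diamOf a a

end OrderFacts
set_option maxHeartbeats 1600000 in
/-- Suppose `M` is a finite metric space that is `C`-embeddable into the
`d`-dimensional Euclidean space, `β ≥ 1/2`, and `𝒩 = {N x}` is a family of finite metric
spaces such that `W n` admits no embedding of distortion `≤ A/B` into any `N x`.  If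
`φ : W n → M_β[𝒩]` satisfies `B · d_{W_n} ≤ d_β ∘ (φ × φ) ≤ A · d_{W_n}`, then either
`2^⌊√n⌋ ≤ (2C(A/B)+1)^d` or `A/B ≥ (1/2+ε)^{⌊√n⌋-n}`. -/
theorem statement14 {M : Type*} [MetricSpace M] [Fintype M] [Nontrivial M]
    (ε : ℝ) (hε0 : 0 < ε) (hε : ε < 1 / 2) (n d : ℕ) (C A B : ℝ)
    (hC : 1 ≤ C) (hA : 0 < A) (hB : 0 < B)
    (hM : embedsM C (fun a b : M => dist a b)
      (fun a b : EuclideanSpace ℝ (Fin d) => ‖a - b‖))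
    (β : ℝ) (hβ : 1 / 2 ≤ β)
    (N : M → Type*) [∀ x, MetricSpace (N x)] [∀ x, Fintype (N x)] [∀ x, Nonempty (N x)]
    (hN : ∀ x : M, ¬ embedsM (A / B) (dW ε n) (fun a b : N x => dist a b))
    (φ : Vert n → Σ x : M, N x)
    (hφ : ∀ u₁ u₂ : Vert n,
      B * dW ε n u₁ u₂ ≤
        comp β (fun a b : M => dist a b) (fun x (a b : N x) => dist a b) (φ u₁) (φ u₂) ∧
      comp β (fun a b : M => dist a b) (fun x (a b : N x) => dist a b) (φ u₁) (φ u₂) ≤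
        A * dW ε n u₁ u₂) :
    (2 : ℝ) ^ (Nat.sqrt n) ≤ (2 * C * (A / B) + 1) ^ d ∨
      (1 / 2 + ε) ^ ((Nat.sqrt n : ℤ) - (n : ℤ)) ≤ A / B := by
  classical
  set dM := (fun a b : M => dist a b) with hdM
  set dN := (fun x (a b : N x) => dist a b) with hdN
  have hAB : 0 < A / B := div_pos hA hB
  rcases Nat.eq_zero_or_pos n with rfl | hn
  · left
    simp only [Nat.sqrt_zero, pow_zero]
    have h1 : (1:ℝ) ≤ 2 * C * (A / B) + 1 := by nlinarith
    exact one_le_pow₀ h1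
  obtain ⟨m, hm⟩ : ∃ m, Nat.sqrt n = m + 1 := by
    have := Nat.sqrt_pos.2 hn
    exact ⟨Nat.sqrt n - 1, by omega⟩
  have hs : m + 1 ≤ n := by
    have := Nat.sqrt_le_self n
    omega
  have hb0 : (0:ℝ) < 1 / 2 + ε := by linarith
  set cc := (1 / 2 + ε) ^ (m + 1) with hcc
  have hccpos : 0 < cc := by positivity
  obtain ⟨v, p, H1, H2, H3⟩ := pack (ε := ε) hε0 hε m n hs
  set F : Vert n → M := fun u => (φ u).1 with hF
  by_cases hone : ∀ a c : Vert n, dEdge n a c → F a = F c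
  · -- the whole image lies in a single fiber: contradiction with hN
    exfalso
    have hall : ∀ u w : Vert n, F u = F w := by
      intro u w
      have h := conn n u w
      induction h with
      | refl => rfl
      | tail hab hbc ih =>
        rcases hbc with h' | h'
        · exact ih.trans (hone _ _ h')
        · exact ih.trans (hone _ _ h').symm
    set x₀ : M := F (base n) with hx₀
    have hfib : ∀ u, (φ u).1 = x₀ := fun u => hall u (base n)
    set f : Vert n → N x₀ := fun u => cast (congrArg N (hfib u)) (φ u).2 with hf
    have hφeq : ∀ u, φ u = ⟨x₀, f u⟩ := by
      intro u
      refine Sigma.ext (hfib u) ?_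
      exact (cast_heq _ _).symm
    have hcomp : ∀ u w, comp β dM dN (φ u) (φ w) = dist (f u) (f w) := by
      intro u w
      rw [hφeq u, hφeq w]
      simp [comp]
      rfl
    apply hN x₀
    refine ⟨f, ?_, B, hB, ?_⟩
    · intro a c hac
      by_contra hne
      have h1 := (hφ a c).1
      rw [hcomp, hac, dist_self] at h1
      have h2 := dW_pos (n := n) hε0 hε hne
      nlinarith
    · intro a c
      have h1 := (hφ a c).1
      have h2 := (hφ a c).2
      rw [hcomp] at h1 h2
      refine ⟨h1, ?_⟩
      calc dist (f a) (f c) ≤ A * dW ε n a c := h2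
        _ = A / B * (B * dW ε n a c) := by field_simp
  · -- some generation-n edge crosses fibers
    push_neg at hone
    obtain ⟨a₀, c₀, hedge, hfibne⟩ := hone
    have ha₀c₀ : a₀ ≠ c₀ := by rintro rfl; exact hfibne rfl
    have hdWpos₀ := dW_pos (n := n) hε0 hε ha₀c₀
    have hdWle₀ : dW ε n a₀ c₀ ≤ (1 / 2 + ε) ^ n :=
      dW_le_edge hε0 (Or.inl (edgeAt_of_dEdge _ _ _ hedge))
    have hcompcr : comp β dM dN (φ a₀) (φ c₀) = β * gam N dM dN * dM (φ a₀).1 (φ c₀).1 := by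
      simp only [comp]; rw [dif_neg hfibne]
    set γ := gam N dM dN with hγ
    set ms := minSep dM with hms
    have hmspos : 0 < ms := minSep_pos
    have h1 := (hφ a₀ c₀).1
    have h2 := (hφ a₀ c₀).2
    rw [hcompcr] at h1 h2
    have hβpos : (0:ℝ) < β := by linarith
    have hdpos : 0 < dM (φ a₀).1 (φ c₀).1 := dist_pos.2 hfibne
    have hβγpos : 0 < β * γ := by nlinarith
    have hγpos : 0 < γ := by
      by_contra hγn
      push_neg at hγn
      nlinarith
    have hkey : γ * ms ≤ 2 * (A * (1 / 2 + ε) ^ n) := by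
      have hmle : ms ≤ dM (φ a₀).1 (φ c₀).1 := minSep_le hfibne
      have hup : β * γ * dM (φ a₀).1 (φ c₀).1 ≤ A * (1 / 2 + ε) ^ n := by
        nlinarith [mul_le_mul_of_nonneg_left hdWle₀ hA.le]
      nlinarith [mul_le_mul_of_nonneg_left hmle hγpos.le,
        mul_nonneg (mul_nonneg (by linarith : (0:ℝ) ≤ β - 1/2) hγpos.le) hdpos.le]
    have hsup : (⨆ x : M, diamOf (dN x)) = γ * ms := by
      rw [hγ, hms, gam]
      rw [div_mul_cancel₀ _ (ne_of_gt hmspos)]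
    set lift : (Fin (m + 1) → Bool) → (ℕ → Bool) :=
      fun σ j => if h : j < m + 1 then σ ⟨j, h⟩ else false with hlift
    have hdiff : ∀ σ τ : Fin (m + 1) → Bool, σ ≠ τ → ∃ j, j < m + 1 ∧ lift σ j ≠ lift τ j := by
      intro σ τ hst
      obtain ⟨j, hj⟩ := Function.ne_iff.1 hst
      refine ⟨j.1, j.2, ?_⟩
      simp only [hlift, dif_pos j.2, Fin.eta]
      exact hj
    set vv : (Fin (m + 1) → Bool) → Vert n := fun σ => v (lift σ) with hvv
    have hdWvv : ∀ σ τ : Fin (m + 1) → Bool, σ ≠ τ → dW ε n (vv σ) (vv τ) = 2 * cc := by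
      intro σ τ hst
      obtain ⟨j, hj1, hj2⟩ := hdiff σ τ hst
      obtain ⟨g, hg, hval⟩ := H3 (lift σ) (lift τ) ⟨j, hj1, hj2⟩
      exact dW_pack hε0 hε (H1 _) (H1 _) g hg hval
    by_cases hsame : ∃ σ τ : Fin (m + 1) → Bool, σ ≠ τ ∧ (φ (vv σ)).1 = (φ (vv τ)).1
    · -- two of the special points share a fiber : distortion bound
      right
      obtain ⟨σ, τ, hst, hfe⟩ := hsame
      have hle1 := (hφ (vv σ) (vv τ)).1
      have hcs : comp β dM dN (φ (vv σ)) (φ (vv τ)) ≤ diamOf (dN (φ (vv σ)).1) := by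
        simp only [comp]; rw [dif_pos hfe]
        exact le_diamOf _ _
      have hds : diamOf (dN (φ (vv σ)).1) ≤ γ * ms := by
        rw [← hsup]
        exact le_ciSup (f := fun x => diamOf (dN x))
          (Set.Finite.bddAbove (Set.finite_range _)) _
      have hfin : B * (2 * cc) ≤ 2 * (A * (1 / 2 + ε) ^ n) := by
        calc B * (2 * cc) = B * dW ε n (vv σ) (vv τ) := by rw [hdWvv σ τ hst]
          _ ≤ comp β dM dN (φ (vv σ)) (φ (vv τ)) := hle1
          _ ≤ γ * ms := hcs.trans hds
          _ ≤ 2 * (A * (1 / 2 + ε) ^ n) := hkey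
      have hpow : ((1:ℝ) / 2 + ε) ^ ((Nat.sqrt n : ℤ) - (n : ℤ)) = cc / (1 / 2 + ε) ^ n := by
        rw [hm, zpow_sub₀ (ne_of_gt hb0), zpow_natCast, zpow_natCast]
      rw [hpow, div_le_div_iff₀ (pow_pos hb0 n) hB]
      linarith
    · -- all special points in distinct fibers : packing bound
      left
      push_neg at hsame
      obtain ⟨femb, hinj, r, hr, hfemb⟩ := hM
      set z : (Fin (m + 1) → Bool) → EuclideanSpace ℝ (Fin d) :=
        fun σ => femb ((φ (vv σ)).1) with hz
      set ρ := r * (2 * B * cc) / (β * γ) with hρ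
      set R := C * r * (2 * A * cc) / (β * γ) with hR
      have hρpos : 0 < ρ := div_pos (by positivity) hβγpos
      have hRpos : 0 < R := div_pos (by positivity) hβγpos
      have hbounds : ∀ σ τ : Fin (m + 1) → Bool, σ ≠ τ →
          ρ ≤ dist (z σ) (z τ) ∧ dist (z σ) (z τ) ≤ R := by
        intro σ τ hst
        have hfe : (φ (vv σ)).1 ≠ (φ (vv τ)).1 := hsame σ τ hst
        have h1' := (hφ (vv σ) (vv τ)).1
        have h2' := (hφ (vv σ) (vv τ)).2
        have hcm : comp β dM dN (φ (vv σ)) (φ (vv τ)) =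
            β * γ * dM (φ (vv σ)).1 (φ (vv τ)).1 := by
          simp only [comp]; rw [dif_neg hfe]
        rw [hcm, hdWvv σ τ hst] at h1' h2'
        have hDlo : 2 * B * cc / (β * γ) ≤ dM (φ (vv σ)).1 (φ (vv τ)).1 := by
          rw [div_le_iff₀ hβγpos]; nlinarith
        have hDhi : dM (φ (vv σ)).1 (φ (vv τ)).1 ≤ 2 * A * cc / (β * γ) := by
          rw [le_div_iff₀ hβγpos]; nlinarith
        have he1 := (hfemb (φ (vv σ)).1 (φ (vv τ)).1).1
        have he2 := (hfemb (φ (vv σ)).1 (φ (vv τ)).1).2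
        have hdist : dist (z σ) (z τ) = ‖z σ - z τ‖ := dist_eq_norm _ _
        constructor
        · rw [hdist]
          calc ρ = r * (2 * B * cc / (β * γ)) := by rw [hρ]; ring
            _ ≤ r * dM (φ (vv σ)).1 (φ (vv τ)).1 :=
                mul_le_mul_of_nonneg_left hDlo hr.le
            _ ≤ ‖z σ - z τ‖ := he1
        · rw [hdist]
          calc ‖z σ - z τ‖ ≤ C * (r * dM (φ (vv σ)).1 (φ (vv τ)).1) := he2
            _ ≤ C * (r * (2 * A * cc / (β * γ))) := by
                refine mul_le_mul_of_nonneg_left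
                  (mul_le_mul_of_nonneg_left hDhi hr.le) (by linarith)
            _ = R := by rw [hR]; ring
      have hdiam : ∀ σ τ : Fin (m + 1) → Bool, dist (z σ) (z τ) ≤ R := by
        intro σ τ
        by_cases hst : σ = τ
        · subst hst; simp [dist_self]; exact hRpos.le
        · exact (hbounds σ τ hst).2
      have hpack := euclid_packing z hρpos hRpos (fun i j h => (hbounds i j h).1) hdiam
      have hcard : (Fintype.card (Fin (m + 1) → Bool) : ℝ) = 2 ^ (m + 1) := by
        rw [Fintype.card_fun]
        norm_num
      rw [hcard] at hpack
      have hRρ : 2 * R / ρ + 1 = 2 * C * (A / B) + 1 := by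
        rw [hρ, hR]
        field_simp
      rw [hm, ← hRρ]
      exact hpack

end Stmt
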